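/- arXiv:1903.00938 — 7 statements merged into one kernel-verified Lean document; each statement's English description precedes it below -/
import Mathlib

section
/- Let $K = [0,\xi] \times [0,\eta]$ with $\xi, \eta > 0$, and let $g_{ij}$ ($i = 1,\dots,4$, $j = 1,2$) be the second-order Gauss--Legendre points on the four edges of $K$: with $\theta_1 = \tfrac12(1 - 1/\sqrt3)$ and $\theta_2 = \tfrac12(1 + 1/\sqrt3)$, set $g_{11} = (\theta_1\xi, 0)$, $g_{12} = (\theta_2\xi, 0)$, $g_{21} = (\xi, \theta_1\eta)$, $g_{22} = (\xi, \theta_2\eta)$, $g_{31} = (\theta_2\xi, \eta)$, $g_{32} = (\theta_1\xi, \eta)$, $g_{41} = (0, \theta_2\eta)$, $g_{42} = (0, \theta_1\eta)$. Then every polynomial $p$ of total degree at most $2$ in two variables satisfies $p(g_{11}) - p(g_{12}) + p(g_{21}) - p(g_{22}) + p(g_{31}) - p(g_{32}) + p(g_{41}) - p(g_{42}) = 0$. -/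
open MvPolynomial

/-- First compatibility condition at the eight edge Gauss points (Lemma A.1, (A.2)). -/
theorem stmt4 (ξ η : ℝ) (hξ : 0 < ξ) (hη : 0 < η)
    (θ₁ θ₂ : ℝ) (hθ₁ : θ₁ = (1 - 1 / Real.sqrt 3) / 2) (hθ₂ : θ₂ = (1 + 1 / Real.sqrt 3) / 2)
    (p : MvPolynomial (Fin 2) ℝ) (hp : p.totalDegree ≤ 2) :
    eval ![θ₁ * ξ, 0] p - eval ![θ₂ * ξ, 0] p
      + eval ![ξ, θ₁ * η] p - eval ![ξ, θ₂ * η] p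
      + eval ![θ₂ * ξ, η] p - eval ![θ₁ * ξ, η] p
      + eval ![(0 : ℝ), θ₂ * η] p - eval ![(0 : ℝ), θ₁ * η] p = 0 := by
  have key : ∀ f : Fin 2 → ℝ, eval f p =
      ∑ d ∈ p.support, coeff d p * (f 0 ^ d 0 * f 1 ^ d 1) := by
    intro f
    rw [eval_eq']
    refine Finset.sum_congr rfl fun d _ => ?_
    rw [Fin.prod_univ_two]
  simp only [key, ← Finset.sum_sub_distrib, ← Finset.sum_add_distrib]
  refine Finset.sum_eq_zero fun d hd => ?_
  have hdeg : d 0 + d 1 ≤ 2 := by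
    have h1 : (d.sum fun _ e => e) ≤ p.totalDegree :=
      MvPolynomial.le_totalDegree hd
    have h2 : (d.sum fun _ e => e) = ∑ i : Fin 2, d i :=
      Finsupp.sum_fintype _ _ (fun _ => rfl)
    rw [h2, Fin.sum_univ_two] at h1
    omega
  simp only [Matrix.cons_val_zero, Matrix.cons_val_one, Matrix.head_cons]
  have h0 : d 0 ≤ 2 := by omega
  have h1 : d 1 ≤ 2 := by omega
  interval_cases h : (d 0) <;> interval_cases h' : (d 1) <;>
    first
      | (exfalso; omega)
      | ring
end

section
/- With the rectangle $K = [0,\xi]\times[0,\eta]$ and Gauss points $g_{ij}$ as above, every $p \in P_2(K)$ satisfies $\theta_1(p(g_{11}) - p(g_{32})) + \theta_2(p(g_{31}) - p(g_{12})) + (p(g_{21}) - p(g_{22})) = 0$, where $\theta_1 = \tfrac12(1-1/\sqrt3)$ and $\theta_2 = \tfrac12(1+1/\sqrt3)$. -/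
open MvPolynomial

/-- Second compatibility condition at the edge Gauss points (Lemma A.1, (A.3)). -/
theorem stmt5 (ξ η : ℝ) (hξ : 0 < ξ) (hη : 0 < η)
    (θ₁ θ₂ : ℝ) (hθ₁ : θ₁ = (1 - 1 / Real.sqrt 3) / 2) (hθ₂ : θ₂ = (1 + 1 / Real.sqrt 3) / 2)
    (p : MvPolynomial (Fin 2) ℝ) (hp : p.totalDegree ≤ 2) :
    θ₁ * (eval ![θ₁ * ξ, 0] p - eval ![θ₁ * ξ, η] p)
      + θ₂ * (eval ![θ₂ * ξ, η] p - eval ![θ₂ * ξ, 0] p)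
      + (eval ![ξ, θ₁ * η] p - eval ![ξ, θ₂ * η] p) = 0 := by
  have key : ∀ (v : Fin 2 → ℝ),
      eval v p = ∑ d ∈ p.support, coeff d p * (v 0 ^ d 0 * v 1 ^ d 1) := by
    intro v
    rw [eval_eq']
    exact Finset.sum_congr rfl fun d _ => by rw [Fin.prod_univ_two]
  simp only [key, Matrix.cons_val_zero, Matrix.cons_val_one, Matrix.head_cons]
  rw [← Finset.sum_sub_distrib, ← Finset.sum_sub_distrib, ← Finset.sum_sub_distrib,
    Finset.mul_sum, Finset.mul_sum, ← Finset.sum_add_distrib, ← Finset.sum_add_distrib]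
  apply Finset.sum_eq_zero
  intro d hd
  have hdeg : d 0 + d 1 ≤ 2 := by
    have h1 := MvPolynomial.le_totalDegree hd
    have h2 : d.sum (fun _ e => e) = d 0 + d 1 := by
      rw [Finsupp.sum_fintype _ _ (fun _ => rfl), Fin.sum_univ_two]
    omega
  have h2 : θ₂ = 1 - θ₁ := by rw [hθ₁, hθ₂]; ring
  rw [h2]
  have ha : d 0 ≤ 2 := by omega
  have hb : d 1 ≤ 2 := by omega
  interval_cases h : (d 0) <;> interval_cases h' : (d 1) <;>
    first | (exfalso; omega) | ring
end

section
/- With the rectangle $K = [0,\xi]\times[0,\eta]$ and Gauss points $g_{ij}$ as above, every $p \in P_2(K)$ satisfies $\theta_1(p(g_{11}) - p(g_{12})) + (\theta_2 - \theta_1)(p(g_{22}) - p(g_{41})) + \theta_2(p(g_{32}) - p(g_{31})) = 0$, where $\theta_1 = \tfrac12(1-1/\sqrt3)$ and $\theta_2 = \tfrac12(1+1/\sqrt3)$. -/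
open MvPolynomial

/-- Third compatibility condition at the edge Gauss points (Lemma A.1, (A.4)). -/
theorem stmt6 (ξ η : ℝ) (hξ : 0 < ξ) (hη : 0 < η)
    (θ₁ θ₂ : ℝ) (hθ₁ : θ₁ = (1 - 1 / Real.sqrt 3) / 2) (hθ₂ : θ₂ = (1 + 1 / Real.sqrt 3) / 2)
    (p : MvPolynomial (Fin 2) ℝ) (hp : p.totalDegree ≤ 2) :
    θ₁ * (eval ![θ₁ * ξ, 0] p - eval ![θ₂ * ξ, 0] p)
      + (θ₂ - θ₁) * (eval ![ξ, θ₂ * η] p - eval ![(0 : ℝ), θ₂ * η] p)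
      + θ₂ * (eval ![θ₁ * ξ, η] p - eval ![θ₂ * ξ, η] p) = 0 := by
  have hsum : θ₁ = 1 - θ₂ := by rw [hθ₁, hθ₂]; ring
  subst hsum
  conv_lhs => rw [p.as_sum]
  simp only [map_sum]
  rw [← Finset.sum_sub_distrib, ← Finset.sum_sub_distrib, ← Finset.sum_sub_distrib,
    Finset.mul_sum, Finset.mul_sum, Finset.mul_sum, ← Finset.sum_add_distrib,
    ← Finset.sum_add_distrib]
  apply Finset.sum_eq_zero
  intro d hd
  have hdeg : d 0 + d 1 ≤ 2 := by
    have := MvPolynomial.le_totalDegree hd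
    have h2 : (d.sum fun _ e => e) = d 0 + d 1 := by
      rw [Finsupp.sum_fintype _ _ (fun _ => rfl), Fin.sum_univ_two]
    omega
  have hev : ∀ v : Fin 2 → ℝ, eval v (monomial d (coeff d p)) =
      coeff d p * (v 0 ^ d 0 * v 1 ^ d 1) := by
    intro v
    rw [eval_monomial, Finsupp.prod_fintype _ _ (fun _ => pow_zero _), Fin.prod_univ_two]
  simp only [hev]
  simp only [Matrix.cons_val_zero, Matrix.cons_val_one, Matrix.head_cons]
  set a := d 0
  set b := d 1
  have ha : a ≤ 2 := le_trans (Nat.le_add_right _ _) hdeg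
  have hb : b ≤ 2 := le_trans (Nat.le_add_left _ _) hdeg
  interval_cases a <;> interval_cases b <;> first | ring1 | (exfalso; omega)
end

section
/- Let $K = [0,L] \times [0,H]$ with $L, H > 0$, with vertices $a_1 = (0,0)$, $a_2 = (L,0)$, $a_3 = (L,H)$, $a_4 = (0,H)$. Given real numbers $\alpha_1, \dots, \alpha_4$ and $\beta_1, \dots, \beta_4$, there exists a unique polynomial $p$ of total degree at most $2$ in $x, y$ satisfying $p(a_i) = \alpha_i$ for $i = 1,\dots,4$, together with $\fint_{\{0\}\times[0,H]} \partial_x p = \beta_1$, $\fint_{[0,L]\times\{0\}} \partial_y p = \beta_2$, $\fint_{\{L\}\times[0,H]} \partial_x p = \beta_3$, $\fint_{[0,L]\times\{H\}} \partial_y p = \beta_4$, if and only if the compatibility conditions $\frac{\alpha_3 - \alpha_4}{L} + \frac{\alpha_2 - \alpha_1}{L} = \beta_1 + \beta_3$ and $\frac{\alpha_3 - \alpha_2}{H} + \frac{\alpha_4 - \alpha_1}{H} = \beta_2 + \beta_4$ hold. -/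
lemma derivX (c₀ c₁ c₂ c₃ c₄ c₅ y x₀ : ℝ) :
    HasDerivAt (fun x : ℝ => c₀ + c₁ * x + c₂ * y + c₃ * x ^ 2 + c₄ * x * y + c₅ * y ^ 2)
      (c₁ + 2 * c₃ * x₀ + c₄ * y) x₀ := by
  have h1 : HasDerivAt (fun x : ℝ => x) 1 x₀ := hasDerivAt_id x₀
  have h2 : HasDerivAt (fun x : ℝ => x ^ 2) (2 * x₀) x₀ := by
    simpa using hasDerivAt_pow 2 x₀
  have h := (((((hasDerivAt_const x₀ c₀).add (h1.const_mul c₁)).add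
      (hasDerivAt_const x₀ (c₂ * y))).add (h2.const_mul c₃)).add
      ((h1.const_mul c₄).mul_const y)).add (hasDerivAt_const x₀ (c₅ * y ^ 2))
  refine h.congr_deriv ?_
  ring

lemma derivY (c₀ c₁ c₂ c₃ c₄ c₅ x y₀ : ℝ) :
    HasDerivAt (fun y : ℝ => c₀ + c₁ * x + c₂ * y + c₃ * x ^ 2 + c₄ * x * y + c₅ * y ^ 2)
      (c₂ + 2 * c₅ * y₀ + c₄ * x) y₀ := by
  have h1 : HasDerivAt (fun y : ℝ => y) 1 y₀ := hasDerivAt_id y₀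
  have h2 : HasDerivAt (fun y : ℝ => y ^ 2) (2 * y₀) y₀ := by
    simpa using hasDerivAt_pow 2 y₀
  have h := (((((hasDerivAt_const y₀ (c₀ + c₁ * x)).add (h1.const_mul c₂)).add
      (hasDerivAt_const y₀ (c₃ * x ^ 2))).add ((h1.const_mul (c₄ * x)))).add
      (h2.const_mul c₅))
  refine h.congr_deriv ?_
  ring

lemma intlem (a b c T : ℝ) : ∫ y in (0:ℝ)..T, (a + b + c * y) = (a + b) * T + c * T ^ 2 / 2 := by
  have hi : IntervalIntegrable (fun y : ℝ => c * y) MeasureTheory.volume 0 T :=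
    IntervalIntegrable.const_mul intervalIntegral.intervalIntegrable_id c
  have h : ∫ y in (0:ℝ)..T, (a + b + c * y) =
      (∫ y in (0:ℝ)..T, (a + b)) + ∫ y in (0:ℝ)..T, c * y := by
    rw [← intervalIntegral.integral_add (intervalIntegrable_const (c := a + b)) hi]
  rw [h, intervalIntegral.integral_const, intervalIntegral.integral_const_mul, integral_id]
  simp
  ring

lemma avgX (c₀ c₁ c₂ c₃ c₄ c₅ H x₀ : ℝ) (hH : H ≠ 0) :
    (1 / H) * ∫ y in (0:ℝ)..H,
      deriv (fun x => c₀ + c₁ * x + c₂ * y + c₃ * x ^ 2 + c₄ * x * y + c₅ * y ^ 2) x₀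
    = c₁ + 2 * c₃ * x₀ + c₄ * H / 2 := by
  have hd : ∀ y : ℝ,
      deriv (fun x => c₀ + c₁ * x + c₂ * y + c₃ * x ^ 2 + c₄ * x * y + c₅ * y ^ 2) x₀
        = c₁ + 2 * c₃ * x₀ + c₄ * y := fun y => (derivX c₀ c₁ c₂ c₃ c₄ c₅ y x₀).deriv
  simp only [hd]
  rw [intlem]
  field_simp

lemma avgY (c₀ c₁ c₂ c₃ c₄ c₅ L y₀ : ℝ) (hL : L ≠ 0) :
    (1 / L) * ∫ x in (0:ℝ)..L,
      deriv (fun y => c₀ + c₁ * x + c₂ * y + c₃ * x ^ 2 + c₄ * x * y + c₅ * y ^ 2) y₀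
    = c₂ + 2 * c₅ * y₀ + c₄ * L / 2 := by
  have hd : ∀ x : ℝ,
      deriv (fun y => c₀ + c₁ * x + c₂ * y + c₃ * x ^ 2 + c₄ * x * y + c₅ * y ^ 2) y₀
        = c₂ + 2 * c₅ * y₀ + c₄ * x := fun x => (derivY c₀ c₁ c₂ c₃ c₄ c₅ x y₀).deriv
  simp only [hd]
  rw [intlem]
  field_simp

lemma clean (L H : ℝ) (hL : L ≠ 0) (hH : H ≠ 0) (p : ℝ → ℝ → ℝ)
    (c₀ c₁ c₂ c₃ c₄ c₅ α₁ α₂ α₃ α₄ β₁ β₂ β₃ β₄ : ℝ)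
    (hp : ∀ x y : ℝ, p x y = c₀ + c₁ * x + c₂ * y + c₃ * x ^ 2 + c₄ * x * y + c₅ * y ^ 2)
    (h1 : p 0 0 = α₁) (h2 : p L 0 = α₂) (h3 : p L H = α₃) (h4 : p 0 H = α₄)
    (h5 : (1 / H) * ∫ y in (0:ℝ)..H, deriv (fun x => p x y) 0 = β₁)
    (h6 : (1 / L) * ∫ x in (0:ℝ)..L, deriv (fun y => p x y) 0 = β₂)
    (h7 : (1 / H) * ∫ y in (0:ℝ)..H, deriv (fun x => p x y) L = β₃)
    (h8 : (1 / L) * ∫ x in (0:ℝ)..L, deriv (fun y => p x y) H = β₄) :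
    c₀ = α₁ ∧ c₀ + c₁ * L + c₃ * L ^ 2 = α₂ ∧
    c₀ + c₁ * L + c₂ * H + c₃ * L ^ 2 + c₄ * L * H + c₅ * H ^ 2 = α₃ ∧
    c₀ + c₂ * H + c₅ * H ^ 2 = α₄ ∧
    c₁ + c₄ * H / 2 = β₁ ∧ c₂ + c₄ * L / 2 = β₂ ∧
    c₁ + 2 * c₃ * L + c₄ * H / 2 = β₃ ∧ c₂ + 2 * c₅ * H + c₄ * L / 2 = β₄ := by
  rw [hp] at h1 h2 h3 h4
  simp only [hp] at h5 h6 h7 h8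
  rw [avgX _ _ _ _ _ _ _ _ hH] at h5 h7
  rw [avgY _ _ _ _ _ _ _ _ hL] at h6 h8
  exact ⟨by linear_combination h1, by linear_combination h2, by linear_combination h3,
    by linear_combination h4, by linear_combination h5, by linear_combination h6,
    by linear_combination h7, by linear_combination h8⟩


/-- A function `ℝ → ℝ → ℝ` is a bivariate polynomial of total degree at most 2. -/
def IsP2 (p : ℝ → ℝ → ℝ) : Prop :=
  ∃ c₀ c₁ c₂ c₃ c₄ c₅ : ℝ, ∀ x y : ℝ,
    p x y = c₀ + c₁ * x + c₂ * y + c₃ * x ^ 2 + c₄ * x * y + c₅ * y ^ 2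

/-- Lemma B.1: existence and uniqueness of a `P₂` polynomial with prescribed vertex
values and edge-average normal derivatives on the rectangle `[0,L] × [0,H]`,
iff the two compatibility conditions hold. -/
theorem stmt7 (L H : ℝ) (hL : 0 < L) (hH : 0 < H)
    (α₁ α₂ α₃ α₄ β₁ β₂ β₃ β₄ : ℝ) :
    (∃! p : ℝ → ℝ → ℝ, IsP2 p ∧
      p 0 0 = α₁ ∧ p L 0 = α₂ ∧ p L H = α₃ ∧ p 0 H = α₄ ∧
      (1 / H) * ∫ y in (0:ℝ)..H, deriv (fun x => p x y) 0 = β₁ ∧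
      (1 / L) * ∫ x in (0:ℝ)..L, deriv (fun y => p x y) 0 = β₂ ∧
      (1 / H) * ∫ y in (0:ℝ)..H, deriv (fun x => p x y) L = β₃ ∧
      (1 / L) * ∫ x in (0:ℝ)..L, deriv (fun y => p x y) H = β₄) ↔
    ((α₃ - α₄) / L + (α₂ - α₁) / L = β₁ + β₃ ∧
     (α₃ - α₂) / H + (α₄ - α₁) / H = β₂ + β₄) := by
  constructor
  · rintro ⟨p, ⟨⟨c₀, c₁, c₂, c₃, c₄, c₅, hp⟩, h1, h2, h3, h4, h5, h6, h7, h8⟩, -⟩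
    obtain ⟨e1, e2, e3, e4, e5, e6, e7, e8⟩ :=
      clean L H hL.ne' hH.ne' p c₀ c₁ c₂ c₃ c₄ c₅ α₁ α₂ α₃ α₄ β₁ β₂ β₃ β₄
        hp h1 h2 h3 h4 h5 h6 h7 h8
    constructor
    · field_simp
      linear_combination (e4 - e3) + (e1 - e2) + L * e5 + L * e7
    · field_simp
      linear_combination (e2 - e3) + (e1 - e4) + H * e6 + H * e8
  · rintro ⟨hc1, hc2⟩
    have hc1' : α₃ - α₄ + (α₂ - α₁) = (β₁ + β₃) * L := by
      field_simp at hc1; linarith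
    have hc2' : α₃ - α₂ + (α₄ - α₁) = (β₂ + β₄) * H := by
      field_simp at hc2; linarith
    refine ⟨fun x y => α₁ + ((α₂ - α₁) / L - (β₃ - β₁) / 2) * x
        + ((α₄ - α₁) / H - (β₄ - β₂) / 2) * y
        + ((β₃ - β₁) / (2 * L)) * x ^ 2
        + ((α₃ - α₄ - α₂ + α₁) / (L * H)) * x * y
        + ((β₄ - β₂) / (2 * H)) * y ^ 2,
      ⟨⟨α₁, _, _, _, _, _, fun x y => rfl⟩, ?_, ?_, ?_, ?_, ?_, ?_, ?_, ?_⟩, ?_⟩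
    · norm_num
    · show α₁ + ((α₂ - α₁) / L - (β₃ - β₁) / 2) * L
        + ((α₄ - α₁) / H - (β₄ - β₂) / 2) * 0
        + ((β₃ - β₁) / (2 * L)) * L ^ 2
        + ((α₃ - α₄ - α₂ + α₁) / (L * H)) * L * 0
        + ((β₄ - β₂) / (2 * H)) * 0 ^ 2 = α₂
      field_simp
      ring
    · show α₁ + ((α₂ - α₁) / L - (β₃ - β₁) / 2) * L
        + ((α₄ - α₁) / H - (β₄ - β₂) / 2) * H
        + ((β₃ - β₁) / (2 * L)) * L ^ 2
        + ((α₃ - α₄ - α₂ + α₁) / (L * H)) * L * H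
        + ((β₄ - β₂) / (2 * H)) * H ^ 2 = α₃
      field_simp
      ring
    · show α₁ + ((α₂ - α₁) / L - (β₃ - β₁) / 2) * 0
        + ((α₄ - α₁) / H - (β₄ - β₂) / 2) * H
        + ((β₃ - β₁) / (2 * L)) * 0 ^ 2
        + ((α₃ - α₄ - α₂ + α₁) / (L * H)) * 0 * H
        + ((β₄ - β₂) / (2 * H)) * H ^ 2 = α₄
      field_simp
      ring
    · rw [avgX _ _ _ _ _ _ _ _ hH.ne']
      field_simp
      linear_combination hc1'
    · rw [avgY _ _ _ _ _ _ _ _ hL.ne']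
      field_simp
      linear_combination hc2'
    · rw [avgX _ _ _ _ _ _ _ _ hH.ne']
      field_simp
      linear_combination hc1'
    · rw [avgY _ _ _ _ _ _ _ _ hL.ne']
      field_simp
      linear_combination hc2'
    · rintro q ⟨⟨d₀, d₁, d₂, d₃, d₄, d₅, hq⟩, g1, g2, g3, g4, g5, g6, g7, g8⟩
      obtain ⟨f1, f2, f3, f4, f5, f6, f7, f8⟩ :=
        clean L H hL.ne' hH.ne' q d₀ d₁ d₂ d₃ d₄ d₅ α₁ α₂ α₃ α₄ β₁ β₂ β₃ β₄
          hq g1 g2 g3 g4 g5 g6 g7 g8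
      have hd1 : d₁ = (α₂ - α₁) / L - (β₃ - β₁) / 2 := by
        field_simp
        linear_combination 2 * (f2 - f1) - L * (f7 - f5)
      have hd2 : d₂ = (α₄ - α₁) / H - (β₄ - β₂) / 2 := by
        field_simp
        linear_combination 2 * (f4 - f1) - H * (f8 - f6)
      have hd3 : d₃ = (β₃ - β₁) / (2 * L) := by
        field_simp
        linear_combination f7 - f5
      have hd4 : d₄ = (α₃ - α₄ - α₂ + α₁) / (L * H) := by
        field_simp
        linear_combination f3 - f4 - f2 + f1
      have hd5 : d₅ = (β₄ - β₂) / (2 * H) := by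
        field_simp
        linear_combination f8 - f6
      funext x y
      rw [hq x y, f1, hd1, hd2, hd3, hd4, hd5]
end

section
/- Let $K = [0,\xi]\times[0,\eta]$ and let $p \in P_2(K)$ (total degree at most 2) vanish at all eight second-order Gauss--Legendre points on the four boundary edges of $K$. Then $p$ is a scalar multiple of $\varphi_0(x,y) = \tfrac{1}{\xi^2}x(\xi-x) + \tfrac{1}{\eta^2}y(\eta-y) - \tfrac16$. -/
open MvPolynomial

private noncomputable def mexp (i j : ℕ) : Fin 2 →₀ ℕ :=
  Finsupp.single 0 i + Finsupp.single 1 j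

private lemma mexp_apply0 (i j : ℕ) : mexp i j 0 = i := by simp [mexp]
private lemma mexp_apply1 (i j : ℕ) : mexp i j 1 = j := by simp [mexp]

private lemma mexp_eq_iff {i j k l : ℕ} : mexp i j = mexp k l ↔ i = k ∧ j = l := by
  constructor
  · intro h
    constructor
    · have := congrArg (fun f => f 0) h; simpa [mexp_apply0] using this
    · have := congrArg (fun f => f 1) h; simpa [mexp_apply1] using this
  · rintro ⟨rfl, rfl⟩; rfl

private lemma eval_p2 (p : MvPolynomial (Fin 2) ℝ) (hp : p.totalDegree ≤ 2) (x y : ℝ) :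
    eval ![x, y] p = coeff (mexp 0 0) p + coeff (mexp 1 0) p * x + coeff (mexp 0 1) p * y
      + coeff (mexp 2 0) p * x ^ 2 + coeff (mexp 1 1) p * (x * y)
      + coeff (mexp 0 2) p * y ^ 2 := by
  have hS : p.support ⊆
      ({mexp 0 0, mexp 1 0, mexp 0 1, mexp 2 0, mexp 1 1, mexp 0 2} : Finset _) := by
    intro d hd
    have hdeg : d 0 + d 1 ≤ 2 := by
      have h1 := MvPolynomial.le_totalDegree hd
      have h2 : d.sum (fun _ e => e) = d 0 + d 1 := by
        rw [Finsupp.sum_fintype]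
        · exact Fin.sum_univ_two d
        · intro; rfl
      omega
    have hd2 : d = mexp (d 0) (d 1) := by
      ext a; fin_cases a <;> simp [mexp, Finsupp.single_apply]
    obtain ⟨i, hi⟩ : ∃ i, d 0 = i := ⟨_, rfl⟩
    obtain ⟨j, hj⟩ : ∃ j, d 1 = j := ⟨_, rfl⟩
    rw [hi, hj] at hd2 hdeg
    rw [hd2]
    simp only [Finset.mem_insert, Finset.mem_singleton, mexp_eq_iff]
    have hi2 : i ≤ 2 := by omega
    have hj2 : j ≤ 2 := by omega
    interval_cases i <;> interval_cases j <;> omega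
  rw [MvPolynomial.eval_eq']
  rw [Finset.sum_subset hS (by intro d _ hd; simp [MvPolynomial.notMem_support_iff.mp hd])]
  rw [Finset.sum_insert (by simp [Finset.mem_insert, mexp_eq_iff]),
      Finset.sum_insert (by simp [Finset.mem_insert, mexp_eq_iff]),
      Finset.sum_insert (by simp [Finset.mem_insert, mexp_eq_iff]),
      Finset.sum_insert (by simp [Finset.mem_insert, mexp_eq_iff]),
      Finset.sum_insert (by simp [Finset.mem_insert, mexp_eq_iff]),
      Finset.sum_singleton]
  simp [Fin.prod_univ_two, mexp_apply0, mexp_apply1]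
  ring

/-- A `P₂` polynomial vanishing at the eight edge Gauss points of the rectangle
`[0,ξ] × [0,η]` is a scalar multiple of the bubble `φ₀` (Lemma A.2 (3)). -/
theorem stmt12 (ξ η : ℝ) (hξ : 0 < ξ) (hη : 0 < η)
    (θ₁ θ₂ : ℝ) (hθ₁ : θ₁ = (1 - 1 / Real.sqrt 3) / 2) (hθ₂ : θ₂ = (1 + 1 / Real.sqrt 3) / 2)
    (p : MvPolynomial (Fin 2) ℝ) (hp : p.totalDegree ≤ 2)
    (h11 : eval ![θ₁ * ξ, 0] p = 0) (h12 : eval ![θ₂ * ξ, 0] p = 0)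
    (h21 : eval ![ξ, θ₁ * η] p = 0) (h22 : eval ![ξ, θ₂ * η] p = 0)
    (h31 : eval ![θ₂ * ξ, η] p = 0) (h32 : eval ![θ₁ * ξ, η] p = 0)
    (h41 : eval ![(0 : ℝ), θ₂ * η] p = 0) (h42 : eval ![(0 : ℝ), θ₁ * η] p = 0) :
    ∃ c : ℝ, ∀ x y : ℝ,
      eval ![x, y] p = c * (x * (ξ - x) / ξ ^ 2 + y * (η - y) / η ^ 2 - 1 / 6) := by
  have h3 : Real.sqrt 3 ^ 2 = 3 := Real.sq_sqrt (by norm_num)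
  have h3pos : 0 < Real.sqrt 3 := Real.sqrt_pos.mpr (by norm_num)
  have hsum : θ₁ + θ₂ = 1 := by rw [hθ₁, hθ₂]; ring
  have hprod : θ₁ * θ₂ = 1 / 6 := by
    rw [hθ₁, hθ₂]
    have : Real.sqrt 3 ≠ 0 := h3pos.ne'
    field_simp
    nlinarith [h3]
  have hne : θ₁ ≠ θ₂ := by
    have hd : θ₂ - θ₁ = 1 / Real.sqrt 3 := by rw [hθ₁, hθ₂]; ring
    intro h
    rw [h, sub_self] at hd
    have : (0 : ℝ) < 1 / Real.sqrt 3 := by positivity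
    linarith [hd ▸ this]
  set A := coeff (mexp 0 0) p with hAdef
  set B := coeff (mexp 1 0) p with hBdef
  set C := coeff (mexp 0 1) p with hCdef
  set D := coeff (mexp 2 0) p with hDdef
  set E := coeff (mexp 1 1) p with hEdef
  set F := coeff (mexp 0 2) p with hFdef
  have key : ∀ x y : ℝ, eval ![x, y] p
      = A + B * x + C * y + D * x ^ 2 + E * (x * y) + F * y ^ 2 := fun x y => eval_p2 p hp x y
  rw [key] at h11 h12 h21 h22 h31 h32 h41 h42
  have hd : θ₁ - θ₂ ≠ 0 := sub_ne_zero.mpr hne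
  have hB : B = -(D * ξ) := by
    have h0 : (θ₁ - θ₂) * ξ * (B + D * ξ) = 0 := by
      linear_combination h11 - h12 - (θ₁ - θ₂) * ξ ^ 2 * D * hsum
    have := (mul_eq_zero.mp h0).resolve_left (mul_ne_zero hd hξ.ne')
    linarith
  have hA : A = D * ξ ^ 2 / 6 := by
    linear_combination h11 - θ₁ * ξ * hB - D * θ₁ * ξ ^ 2 * hsum + D * ξ ^ 2 * hprod
  have hC : C = -(F * η) := by
    have h0 : (θ₁ - θ₂) * η * (C + F * η) = 0 := by
      linear_combination h42 - h41 - (θ₁ - θ₂) * η ^ 2 * F * hsum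
    have := (mul_eq_zero.mp h0).resolve_left (mul_ne_zero hd hη.ne')
    linarith
  have hA2 : A = F * η ^ 2 / 6 := by
    linear_combination h42 - θ₁ * η * hC - F * θ₁ * η ^ 2 * hsum + F * η ^ 2 * hprod
  have hE : E = 0 := by
    have h0 : (θ₁ - θ₂) * η * (C + E * ξ + F * η) = 0 := by
      linear_combination h21 - h22 - (θ₁ - θ₂) * η ^ 2 * F * hsum
    have h1 := (mul_eq_zero.mp h0).resolve_left (mul_ne_zero hd hη.ne')
    have h2 : E * ξ = 0 := by linarith [hC]
    rcases mul_eq_zero.mp h2 with h | h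
    · exact h
    · exact absurd h hξ.ne'
  have hDF : F * η ^ 2 = D * ξ ^ 2 := by linarith [hA, hA2]
  refine ⟨-(D * ξ ^ 2), fun x y => ?_⟩
  rw [key, hA, hB, hC, hE]
  have hx0 : ξ ≠ 0 := hξ.ne'
  have hy0 : η ≠ 0 := hη.ne'
  field_simp
  linear_combination 6 * (y ^ 2 - η * y) * hDF
end

section
/- Consider the linear system in the unknowns $(x_{i-1}, x_i, z_i^1, z_{i+1}^1, z_i^2, z_{i+1}^2, y_{i-1}^1, y_{i-1}^2, y_i^1, y_i^2, y_{i+1}^1, y_{i+1}^2) \in \mathbb{R}^{12}$ with positive parameters $L_{i-1}, L_i, L_{i+1}, H_1, H_2$: (1) $x_{i-1}/L_{i-1} = z_i^1$; (2) $x_{i-1}/H_1 = y_{i-1}^1 + y_{i-1}^2$; (3) $(x_i - x_{i-1})/L_i = z_i^1 + z_{i+1}^1$; (4) $(x_i + x_{i-1})/H_1 = y_i^1 + y_i^2$; (5) $-x_i/L_{i+1} = z_{i+1}^1$; (6) $x_i/H_1 = y_{i+1}^1 + y_{i+1}^2$; (7) $x_{i-1}/L_{i-1} = z_i^2$; (8)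 $-x_{i-1}/H_2 = y_{i-1}^2$; (9) $(x_i - x_{i-1})/L_i = z_i^2 + z_{i+1}^2$; (10) $-(x_{i-1}+x_i)/H_2 = y_i^2$; (11) $-x_i/L_{i+1} = z_{i+1}^2$; (12) $-x_i/H_2 = y_{i+1}^2$. The solution space of this system is exactly one-dimensional. -/
set_option maxHeartbeats 1000000

private def vec12 (c0 c1 c2 c3 c4 c5 c6 c7 c8 c9 c10 c11 : ℝ) : Fin 12 → ℝ :=
  fun i => match i with
  | ⟨0, _⟩ => c0 | ⟨1, _⟩ => c1 | ⟨2, _⟩ => c2 | ⟨3, _⟩ => c3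
  | ⟨4, _⟩ => c4 | ⟨5, _⟩ => c5 | ⟨6, _⟩ => c6 | ⟨7, _⟩ => c7
  | ⟨8, _⟩ => c8 | ⟨9, _⟩ => c9 | ⟨10, _⟩ => c10 | ⟨11, _⟩ => c11

section
variable (c0 c1 c2 c3 c4 c5 c6 c7 c8 c9 c10 c11 : ℝ)
@[simp] private lemma vec12_0 : vec12 c0 c1 c2 c3 c4 c5 c6 c7 c8 c9 c10 c11 0 = c0 := rfl
@[simp] private lemma vec12_1 : vec12 c0 c1 c2 c3 c4 c5 c6 c7 c8 c9 c10 c11 1 = c1 := rfl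
@[simp] private lemma vec12_2 : vec12 c0 c1 c2 c3 c4 c5 c6 c7 c8 c9 c10 c11 2 = c2 := rfl
@[simp] private lemma vec12_3 : vec12 c0 c1 c2 c3 c4 c5 c6 c7 c8 c9 c10 c11 3 = c3 := rfl
@[simp] private lemma vec12_4 : vec12 c0 c1 c2 c3 c4 c5 c6 c7 c8 c9 c10 c11 4 = c4 := rfl
@[simp] private lemma vec12_5 : vec12 c0 c1 c2 c3 c4 c5 c6 c7 c8 c9 c10 c11 5 = c5 := rfl
@[simp] private lemma vec12_6 : vec12 c0 c1 c2 c3 c4 c5 c6 c7 c8 c9 c10 c11 6 = c6 := rfl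
@[simp] private lemma vec12_7 : vec12 c0 c1 c2 c3 c4 c5 c6 c7 c8 c9 c10 c11 7 = c7 := rfl
@[simp] private lemma vec12_8 : vec12 c0 c1 c2 c3 c4 c5 c6 c7 c8 c9 c10 c11 8 = c8 := rfl
@[simp] private lemma vec12_9 : vec12 c0 c1 c2 c3 c4 c5 c6 c7 c8 c9 c10 c11 9 = c9 := rfl
@[simp] private lemma vec12_10 : vec12 c0 c1 c2 c3 c4 c5 c6 c7 c8 c9 c10 c11 10 = c10 := rfl
@[simp] private lemma vec12_11 : vec12 c0 c1 c2 c3 c4 c5 c6 c7 c8 c9 c10 c11 11 = c11 := rfl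
end

/-- The solution set of the 12×12 linear system of Lemma B.2 (bottom-interior-edge
pattern of the RRM element).  Unknown ordering:
`u 0 = x_{i-1}`, `u 1 = x_i`, `u 2 = z_i^1`, `u 3 = z_{i+1}^1`, `u 4 = z_i^2`,
`u 5 = z_{i+1}^2`, `u 6 = y_{i-1}^1`, `u 7 = y_{i-1}^2`, `u 8 = y_i^1`,
`u 9 = y_i^2`, `u 10 = y_{i+1}^1`, `u 11 = y_{i+1}^2`. -/
def solSet (L₁ L₂ L₃ H₁ H₂ : ℝ) : Set (Fin 12 → ℝ) :=
  {u | u 0 / L₁ = u 2 ∧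
       u 0 / H₁ = u 6 + u 7 ∧
       (u 1 - u 0) / L₂ = u 2 + u 3 ∧
       (u 1 + u 0) / H₁ = u 8 + u 9 ∧
       -(u 1) / L₃ = u 3 ∧
       u 1 / H₁ = u 10 + u 11 ∧
       u 0 / L₁ = u 4 ∧
       -(u 0) / H₂ = u 7 ∧
       (u 1 - u 0) / L₂ = u 4 + u 5 ∧
       -(u 0 + u 1) / H₂ = u 9 ∧
       -(u 1) / L₃ = u 5 ∧
       -(u 1) / H₂ = u 11}

/-- The solution space of the system is exactly one-dimensional. -/
theorem stmt16 (L₁ L₂ L₃ H₁ H₂ : ℝ)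
    (hL₁ : 0 < L₁) (hL₂ : 0 < L₂) (hL₃ : 0 < L₃) (hH₁ : 0 < H₁) (hH₂ : 0 < H₂) :
    ∃ v ∈ solSet L₁ L₂ L₃ H₁ H₂, v ≠ 0 ∧
      ∀ w ∈ solSet L₁ L₂ L₃ H₁ H₂, ∃ c : ℝ, w = c • v := by
  have hL₁' := hL₁.ne'
  have hL₂' := hL₂.ne'
  have hL₃' := hL₃.ne'
  have hH₁' := hH₁.ne'
  have hH₂' := hH₂.ne'
  set a : ℝ := 1 / L₂ + 1 / L₃ with ha
  set b : ℝ := 1 / L₁ + 1 / L₂ with hb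
  have hapos : 0 < a := by positivity
  refine ⟨vec12 a b (a / L₁) (-b / L₃) (a / L₁) (-b / L₃)
      (a / H₁ + a / H₂) (-a / H₂) ((a + b) / H₁ + (a + b) / H₂)
      (-(a + b) / H₂) (b / H₁ + b / H₂) (-b / H₂), ?_, ?_, ?_⟩
  · refine ⟨?_, ?_, ?_, ?_, ?_, ?_, ?_, ?_, ?_, ?_, ?_, ?_⟩ <;>
      simp only [vec12_0, vec12_1, vec12_2, vec12_3, vec12_4, vec12_5, vec12_6,
        vec12_7, vec12_8, vec12_9, vec12_10, vec12_11, ha, hb] <;>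
      field_simp <;> ring
  · intro h
    have h0 := congrFun h 0
    simp only [vec12_0, Pi.zero_apply] at h0
    exact absurd h0 hapos.ne'
  · rintro w ⟨e1, e2, e3, e4, e5, e6, e7, e8, e9, e10, e11, e12⟩
    have ha' : a ≠ 0 := hapos.ne'
    have key : w 1 * a = w 0 * b := by
      have h : (w 1 - w 0) / L₂ = w 0 / L₁ + -(w 1) / L₃ := by rw [e3, ← e1, ← e5]
      rw [ha, hb]
      field_simp at h ⊢
      nlinarith [h]
    refine ⟨w 0 / a, ?_⟩
    have hw1 : w 1 = w 0 / a * b := by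
      field_simp
      linarith [key]
    rw [neg_div] at e8 e10 e12
    have h6 : w 6 = w 0 / H₁ + w 0 / H₂ := by
      have h7 : w 7 = -(w 0 / H₂) := e8.symm
      linarith [e2]
    have h8 : w 8 = (w 1 + w 0) / H₁ + (w 0 + w 1) / H₂ := by
      have h9 : w 9 = -((w 0 + w 1) / H₂) := e10.symm
      linarith [e4]
    have h10 : w 10 = w 1 / H₁ + w 1 / H₂ := by
      have h11 : w 11 = -(w 1 / H₂) := e12.symm
      linarith [e6]
    have hc0 : w 0 = w 0 / a * a := by field_simp
    have hc1 : w 1 = w 0 / a * b := hw1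
    have hc2 : w 2 = w 0 / a * (a / L₁) := by rw [← e1]; field_simp
    have hc3 : w 3 = w 0 / a * (-b / L₃) := by rw [← e5, hw1]; ring
    have hc4 : w 4 = w 0 / a * (a / L₁) := by rw [← e7]; field_simp
    have hc5 : w 5 = w 0 / a * (-b / L₃) := by rw [← e11, hw1]; ring
    have hc6 : w 6 = w 0 / a * (a / H₁ + a / H₂) := by rw [h6]; field_simp
    have hc7 : w 7 = w 0 / a * (-a / H₂) := by rw [← e8]; field_simp
    have hc8 : w 8 = w 0 / a * ((a + b) / H₁ + (a + b) / H₂) := by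
      rw [h8, hw1]; field_simp; ring
    have hc9 : w 9 = w 0 / a * (-(a + b) / H₂) := by
      rw [← e10, hw1]; field_simp
    have hc10 : w 10 = w 0 / a * (b / H₁ + b / H₂) := by
      rw [h10, hw1]; field_simp
    have hc11 : w 11 = w 0 / a * (-b / H₂) := by rw [← e12, hw1]; field_simp
    funext i
    fin_cases i
    · exact hc0
    · exact hc1
    · exact hc2
    · exact hc3
    · exact hc4
    · exact hc5
    · exact hc6
    · exact hc7
    · exact hc8
    · exact hc9
    · exact hc10
    · exact hc11
end

section
/- Let $a_h$ and $b$ be symmetric bilinear forms on a real vector space $V$, $(\lambda, u)$ and $(\lambda_h, u_h)$ pairs with $b(u,u) = b(u_h,u_h) = 1$, $a_h(u,u) = \lambda$, $a_h(u_h,u_h) = \lambda_h$, and suppose $a_h(u_h, w) = \lambda_h b(u_h, w)$ for all $w$ in a subspace $W$ containing $u_h$ and an element $\Pi u$. Then the expansion $\lambda - \lambda_h = a_h(u - u_h, u - u_h) - \lambda_h b(u - u_h, u - u_h) - 2\lambda_h b(u - \Pi u, u_h) + 2 a_h(u - \Pi u, \Pi u) + 2 a_h(u - \Pi u, u_h -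 \Pi u)$ holds. -/
/-- Abstract eigenvalue error expansion identity (equation (3.10), generalizing the
Armentano--Durán identity). -/
theorem stmt19 {V : Type*} [AddCommGroup V] [Module ℝ V]
    (a_h b : V →ₗ[ℝ] V →ₗ[ℝ] ℝ)
    (ha_symm : ∀ x y, a_h x y = a_h y x) (hb_symm : ∀ x y, b x y = b y x)
    (W : Submodule ℝ V) (u u_h Pu : V) (lam lam_h : ℝ)
    (hu_hW : u_h ∈ W) (hPuW : Pu ∈ W)
    (hbu : b u u = 1) (hbuh : b u_h u_h = 1)
    (hlam : a_h u u = lam) (hlamh : a_h u_h u_h = lam_h)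
    (heig : ∀ w ∈ W, a_h u_h w = lam_h * b u_h w) :
    lam - lam_h =
      a_h (u - u_h) (u - u_h) - lam_h * b (u - u_h) (u - u_h)
        - 2 * lam_h * b (u - Pu) u_h
        + 2 * a_h (u - Pu) Pu
        + 2 * a_h (u - Pu) (u_h - Pu) := by
  have h1 := heig u_h hu_hW
  have h2 := heig Pu hPuW
  have s1 := ha_symm u u_h
  have s2 := ha_symm u Pu
  have s3 := ha_symm u_h Pu
  have t1 := hb_symm u u_h
  have t3 := hb_symm u_h Pu
  simp only [map_sub, LinearMap.sub_apply] at *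
  linear_combination -hlam - s1 - h1 + lam_h*hbu + lam_h*t1 - 2*s3 + 2*h2 + 2*lam_h*t3
end
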